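/- For every integer n ≥ 2, the sum H(n) = Σ_{k=1}^{n} (k-1)!·S(n,k) equals 2·B(n-1), and H(1) = 1. -/

import Mathlib

open Finset

/-- Stirling numbers of the second kind. -/
def S : ℕ → ℕ → ℕ
  | 0, 0 => 1
  | 0, _ + 1 => 0
  | _ + 1, 0 => 0
  | n + 1, k + 1 => (k + 1) * S n (k + 1) + S n k

/-- Ordered Bell (Fubini) numbers. -/
def B (n : ℕ) : ℕ := ∑ k ∈ range (n + 1), k.factorial * S n k

lemma S_gt : ∀ n k : ℕ, n < k → S n k = 0 := by
  intro n
  induction n with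
  | zero => intro k h; cases k with
    | zero => omega
    | succ k => rfl
  | succ n ih =>
    intro k h
    cases k with
    | zero => omega
    | succ k =>
      show (k + 1) * S n (k + 1) + S n k = 0
      rw [ih k (by omega), ih (k+1) (by omega)]
      simp

theorem stmt2 :
    (∀ n : ℕ, 2 ≤ n → ∑ k ∈ Icc 1 n, (k - 1).factorial * S n k = 2 * B (n - 1)) ∧
    ∑ k ∈ Icc 1 1, (k - 1).factorial * S 1 k = 1 := by
  constructor
  · intro n hn
    obtain ⟨m, rfl⟩ : ∃ m, n = m + 2 := ⟨n - 2, by omega⟩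
    have hIcc : ∑ k ∈ Icc 1 (m+2), (k - 1).factorial * S (m+2) k
        = ∑ i ∈ range (m+2), i.factorial * S (m+2) (i+1) := by
      have hmap : Icc 1 (m+2) = (range (m+2)).map ⟨(· + 1), show Function.Injective (· + 1) from fun a b h => by simpa using h⟩ := by
        ext x
        simp only [mem_Icc, mem_map, mem_range, Function.Embedding.coeFn_mk]
        constructor
        · intro h; exact ⟨x - 1, by omega, by omega⟩
        · rintro ⟨y, hy, rfl⟩; omega
      rw [hmap, Finset.sum_map]
      apply Finset.sum_congr rfl
      intro i _
      simp
    have hsplit : ∑ i ∈ range (m+2), i.factorial * S (m+2) (i+1)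
        = (∑ i ∈ range (m+2), (i+1).factorial * S (m+1) (i+1))
          + ∑ i ∈ range (m+2), i.factorial * S (m+1) i := by
      rw [← Finset.sum_add_distrib]
      apply Finset.sum_congr rfl
      intro i _
      show i.factorial * ((i + 1) * S (m+1) (i + 1) + S (m+1) i) = _
      rw [Nat.factorial_succ]
      ring
    have e1 : (∑ i ∈ range (m+2), (i+1).factorial * S (m+1) (i+1))
        = ∑ k ∈ range (m+3), k.factorial * S (m+1) k := by
      rw [Finset.sum_range_succ' (fun k => k.factorial * S (m+1) k) (m+2)]
      simp [show S (m+1) 0 = 0 from rfl]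
    have e2 : ∑ k ∈ range (m+3), k.factorial * S (m+1) k = B (m+1) := by
      rw [show m+3 = (m+2)+1 from rfl, Finset.sum_range_succ,
        S_gt (m+1) (m+2) (by omega)]
      simp [B]
    show ∑ k ∈ Icc 1 (m+2), (k - 1).factorial * S (m+2) k = 2 * B (m+2-1)
    rw [hIcc, hsplit, e1, e2, show m+2-1 = m+1 from rfl, show B (m+1) = ∑ i ∈ range (m+2), i.factorial * S (m+1) i from rfl]
    ring
  · decide
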